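/- arXiv:2302.04963 — 2 statements merged into one kernel-verified Lean document; each statement's English description precedes it below -/
import Mathlib

section
/- Let d ≥ 4 and let L ∈ ℕ satisfy L + 1 ≤ d/(90² (log d)²). Let P : ℝ^d → ℝ^d be an orthogonal projection, and let v_0, v_1, …, v_L ∈ ℝ^d satisfy ‖v_l‖ ≤ 1 for all l. Define z_{−1} = 0, z_l = Σ_{l'=0}^{l} P v_{l'} for 0 ≤ l ≤ L, C = √(40 (L+1) log d), x̄ = −z_L / C, and t₀ = 3 √(log d / d). Assume that for every 0 ≤ l ≤ L: (i) |⟨v_l, z_{l−1}⟩| ≤ t₀ ‖z_{l−1}‖ and |⟨P v_l, z_{l−1}⟩| ≤ t₀ ‖z_{l−1}‖; (ii) ‖P v_l‖² ≥ 1/2 − 2 √(log d / d) − 2/d³; and (iii) |Σ_{l'=l+1}^{L} ⟨v_l, P v_{l'}⟩| ≤ 8 log d · √((L+1)/d). Then ‖x̄‖ ≤ 1, x̄ lies in the range of P, and ⟨v_l, x̄⟩ ≤ −1/(40 √((L+1) log d)) for every 0 ≤ l ≤ L. -/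
open scoped RealInnerProductSpace

set_option maxHeartbeats 1000000 in
/-- Construction of a feasible point with low objective value: under the concentration
events (i)–(iii), the normalized sum `x̄ = -z_L/C` of the projected vectors `P v_l` lies
in the unit ball, belongs to the range of `P`, and satisfies
`⟨v_l, x̄⟩ ≤ -1/(40 √((L+1) log d))` for every `l ≤ L`.
Here `z l` denotes the paper's `z_{l-1} = Σ_{l' < l} P v_{l'}`, so that `z 0 = 0` and the
paper's `z_L` is `z (L+1)`. -/
theorem low_optimum_construction (d L : ℕ) (hd : 4 ≤ d)
    (hL : (L : ℝ) + 1 ≤ (d : ℝ) / (90 ^ 2 * Real.log d ^ 2))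
    (P : EuclideanSpace ℝ (Fin d) →ₗ[ℝ] EuclideanSpace ℝ (Fin d))
    (hidem : ∀ x, P (P x) = P x)
    (hsa : ∀ x y, ⟪P x, y⟫ = ⟪x, P y⟫)
    (v : ℕ → EuclideanSpace ℝ (Fin d)) (hv : ∀ l ≤ L, ‖v l‖ ≤ 1)
    (z : ℕ → EuclideanSpace ℝ (Fin d))
    (hz : ∀ l, z l = ∑ l' ∈ Finset.range l, P (v l'))
    (C t₀ : ℝ)
    (hC : C = Real.sqrt (40 * ((L : ℝ) + 1) * Real.log d))
    (ht₀ : t₀ = 3 * Real.sqrt (Real.log d / d))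
    (xbar : EuclideanSpace ℝ (Fin d)) (hxbar : xbar = -(C⁻¹ • z (L + 1)))
    (h1 : ∀ l ≤ L, |⟪v l, z l⟫| ≤ t₀ * ‖z l‖ ∧ |⟪P (v l), z l⟫| ≤ t₀ * ‖z l‖)
    (h2 : ∀ l ≤ L,
      1 / 2 - 2 * Real.sqrt (Real.log d / d) - 2 / (d : ℝ) ^ 3 ≤ ‖P (v l)‖ ^ 2)
    (h3 : ∀ l ≤ L,
      |∑ l' ∈ Finset.Icc (l + 1) L, ⟪v l, P (v l')⟫|
        ≤ 8 * Real.log d * Real.sqrt (((L : ℝ) + 1) / d)) :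
    ‖xbar‖ ≤ 1 ∧ xbar ∈ LinearMap.range P ∧
      ∀ l ≤ L, ⟪v l, xbar⟫ ≤ -(1 / (40 * Real.sqrt (((L : ℝ) + 1) * Real.log d))) := by
  set a : ℝ := Real.log d with ha_def
  -- basic numeric facts
  have hd4 : (4:ℝ) ≤ (d:ℝ) := by exact_mod_cast hd
  have hdpos : (0:ℝ) < d := by linarith
  have ha : (1.38:ℝ) ≤ a := by
    have h4 : Real.log 4 ≤ a := Real.log_le_log (by norm_num) hd4
    have h42 : Real.log 4 = 2 * Real.log 2 := by
      rw [show (4:ℝ) = 2 ^ 2 by norm_num, Real.log_pow]; push_cast; ring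
    have := Real.log_two_gt_d9
    linarith
  have hapos : (0:ℝ) < a := by linarith
  have hLnn : (0:ℝ) ≤ (L:ℝ) := Nat.cast_nonneg L
  have hL1 : (1:ℝ) ≤ (L:ℝ) + 1 := by linarith
  have hkey : 8100 * (a ^ 2 * ((L:ℝ) + 1)) ≤ (d:ℝ) := by
    rw [le_div_iff₀ (by positivity)] at hL
    nlinarith
  have hprod1 : (0:ℝ) ≤ (L:ℝ) * a ^ 2 := by positivity
  have hprod2 : (0:ℝ) ≤ (a - 1.38) * a := by nlinarith
  have hd8100 : (8100:ℝ) ≤ (d:ℝ) := by nlinarith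
  -- a/d is tiny
  have had : a / d ≤ 0.0095 ^ 2 := by
    rw [div_le_iff₀ hdpos]
    nlinarith
  -- helper: q ≤ c from q² ≤ c²
  have le_of_sq : ∀ q c : ℝ, 0 ≤ q → 0 ≤ c → q ^ 2 ≤ c ^ 2 → q ≤ c := by
    intro q c hq hc h; nlinarith
  have hsqrt_ad : Real.sqrt (a / d) ≤ 0.0095 :=
    (Real.sqrt_le_sqrt had).trans (by rw [Real.sqrt_sq (by norm_num)])
  have ht₀nn : 0 ≤ t₀ := by rw [ht₀]; positivity
  have ht₀sq : t₀ ^ 2 = 9 * (a / d) := by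
    rw [ht₀, mul_pow, Real.sq_sqrt (by positivity)]; ring
  -- the common estimate: if ‖z l‖² ≤ 40 a (L+1) then t₀‖z l‖ ≤ 0.211
  have hqbound : ∀ l : ℕ, ‖z l‖ ^ 2 ≤ 40 * a * ((L:ℝ) + 1) → t₀ * ‖z l‖ ≤ 0.211 := by
    intro l hzl
    refine le_of_sq _ _ (by positivity) (by norm_num) ?_
    have hsq : (t₀ * ‖z l‖) ^ 2 = t₀ ^ 2 * ‖z l‖ ^ 2 := by ring
    rw [hsq, ht₀sq]
    have hadnn : (0:ℝ) ≤ 9 * (a / d) := by positivity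
    have hstep : 9 * (a / d) * ‖z l‖ ^ 2 ≤ 9 * (a / d) * (40 * a * ((L:ℝ) + 1)) :=
      mul_le_mul_of_nonneg_left hzl hadnn
    have heq : 9 * (a / d) * (40 * a * ((L:ℝ) + 1)) = 360 * (a ^ 2 * ((L:ℝ) + 1)) / d := by
      field_simp; ring
    have hle : 360 * (a ^ 2 * ((L:ℝ) + 1)) / d ≤ 360 / 8100 := by
      rw [div_le_div_iff₀ hdpos (by norm_num)]
      linarith
    rw [heq] at hstep
    calc 9 * (a / d) * ‖z l‖ ^ 2 ≤ 360 / 8100 := by linarith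
      _ ≤ 0.211 ^ 2 := by norm_num
  -- P is a contraction
  have hPxsq : ∀ x, ⟪x, P x⟫ = ‖P x‖ ^ 2 := by
    intro x
    rw [← real_inner_self_eq_norm_sq, hsa x (P x), hidem]
  have hcontr : ∀ x, ‖P x‖ ≤ ‖x‖ := by
    intro x
    have h1 : ‖P x‖ ^ 2 = ⟪x, P x⟫ := (hPxsq x).symm
    have h3 : ⟪x, P x⟫ ≤ ‖x‖ * ‖P x‖ := real_inner_le_norm x (P x)
    nlinarith [norm_nonneg (P x), norm_nonneg x]
  have hzz : ∀ l, z (l + 1) = z l + P (v l) := by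
    intro l; rw [hz, hz, Finset.sum_range_succ]
  -- growth of ‖z l‖²
  have hgrow : ∀ l, l ≤ L + 1 → ‖z l‖ ^ 2 ≤ 40 * a * l := by
    intro l
    induction l with
    | zero => intro _; simp [hz]
    | succ n ih =>
      intro hl
      have hnL : n ≤ L := by omega
      have ihn : ‖z n‖ ^ 2 ≤ 40 * a * n := ih (by omega)
      have hnL' : (n:ℝ) ≤ (L:ℝ) + 1 := by
        have : (n:ℝ) ≤ (L:ℝ) := by exact_mod_cast hnL
        linarith
      have hzn2 : ‖z n‖ ^ 2 ≤ 40 * a * ((L:ℝ) + 1) := by nlinarith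
      have hq : t₀ * ‖z n‖ ≤ 0.211 := hqbound n hzn2
      have hb : |⟪P (v n), z n⟫| ≤ t₀ * ‖z n‖ := (h1 n hnL).2
      have hPv : ‖P (v n)‖ ≤ 1 := (hcontr (v n)).trans (hv n hnL)
      have hPvnn : (0:ℝ) ≤ ‖P (v n)‖ := norm_nonneg _
      have hPv2 : ‖P (v n)‖ ^ 2 ≤ 1 := by nlinarith
      have hinner : ⟪z n, P (v n)⟫ ≤ 0.211 := by
        have := (abs_le.mp hb).2
        rw [real_inner_comm]
        linarith
      have hcast : ((n + 1 : ℕ):ℝ) = (n:ℝ) + 1 := by push_cast; ring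
      rw [hzz, norm_add_sq_real, hcast]
      have h40a : (55:ℝ) ≤ 40 * a := by linarith
      linarith
  -- ‖z (L+1)‖ ≤ C
  have hCsq : C ^ 2 = 40 * ((L:ℝ) + 1) * a := by
    rw [hC, Real.sq_sqrt (by positivity)]
  have hCpos : 0 < C := by
    rw [hC]
    exact Real.sqrt_pos.mpr (by positivity)
  have hzL2 : ‖z (L + 1)‖ ^ 2 ≤ 40 * a * ((L:ℝ) + 1) := by
    have := hgrow (L + 1) le_rfl
    have hcast : ((L + 1 : ℕ):ℝ) = (L:ℝ) + 1 := by push_cast; ring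
    rw [hcast] at this
    linarith
  have hzLC : ‖z (L + 1)‖ ≤ C := by
    refine le_of_sq _ _ (norm_nonneg _) hCpos.le ?_
    rw [hCsq]; linarith
  refine ⟨?_, ?_, ?_⟩
  · rw [hxbar, norm_neg, norm_smul, norm_inv, Real.norm_eq_abs, abs_of_pos hCpos]
    rw [inv_mul_le_iff₀ hCpos]
    simpa using hzLC
  · refine ⟨-(C⁻¹ • z (L + 1)), ?_⟩
    have hPz : P (z (L + 1)) = z (L + 1) := by
      rw [hz, map_sum]
      exact Finset.sum_congr rfl fun i _ => hidem (v i)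
    rw [hxbar, map_neg, map_smul, hPz]
  · intro l hl
    -- split the sum
    have hsplit : z (L + 1) = z l + P (v l) + ∑ l' ∈ Finset.Icc (l + 1) L, P (v l') := by
      have hIcc : Finset.Icc (l + 1) L = Finset.Ico (l + 1) (L + 1) := (Finset.Ico_add_one_right_eq_Icc _ _).symm
      rw [hz, hz, hIcc, Finset.range_eq_Ico,
        ← Finset.sum_Ico_consecutive (fun i => P (v i)) (Nat.zero_le (l + 1)) (by omega),
        ← Finset.range_eq_Ico, Finset.sum_range_succ]
    have hinner : ⟪v l, z (L + 1)⟫ = ⟪v l, z l⟫ + ‖P (v l)‖ ^ 2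
        + ∑ l' ∈ Finset.Icc (l + 1) L, ⟪v l, P (v l')⟫ := by
      rw [hsplit, inner_add_right, inner_add_right, inner_sum, hPxsq]
    -- bound each term
    have hzl2 : ‖z l‖ ^ 2 ≤ 40 * a * ((L:ℝ) + 1) := by
      have := hgrow l (by omega)
      have hlL : (l:ℝ) ≤ (L:ℝ) + 1 := by
        have : (l:ℝ) ≤ (L:ℝ) := by exact_mod_cast hl
        linarith
      nlinarith
    have hb1 : |⟪v l, z l⟫| ≤ 0.211 := (h1 l hl).1.trans (hqbound l hzl2)
    have hb2 : 1 / 2 - 2 * Real.sqrt (a / d) - 2 / (d:ℝ) ^ 3 ≤ ‖P (v l)‖ ^ 2 := h2 l hl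
    have hb3 : |∑ l' ∈ Finset.Icc (l + 1) L, ⟪v l, P (v l')⟫| ≤ 0.089 := by
      refine (h3 l hl).trans ?_
      refine le_of_sq _ _ (by positivity) (by norm_num) ?_
      have hs : (8 * a * Real.sqrt (((L:ℝ) + 1) / d)) ^ 2 = 64 * (a ^ 2 * ((L:ℝ) + 1)) / d := by
        rw [mul_pow, mul_pow, Real.sq_sqrt (by positivity)]; ring
      rw [hs]
      have : 64 * (a ^ 2 * ((L:ℝ) + 1)) / d ≤ 64 / 8100 := by
        rw [div_le_div_iff₀ hdpos (by norm_num)]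
        linarith
      calc 64 * (a ^ 2 * ((L:ℝ) + 1)) / d ≤ 64 / 8100 := this
        _ ≤ 0.089 ^ 2 := by norm_num
    have hd3 : 2 / (d:ℝ) ^ 3 ≤ 0.00025 := by
      rw [div_le_iff₀ (by positivity)]
      have hcube : (8100:ℝ) ^ 3 ≤ (d:ℝ) ^ 3 := pow_le_pow_left₀ (by norm_num) hd8100 3
      linarith
    -- lower bound on the inner product
    have hlow : (0.18:ℝ) ≤ ⟪v l, z (L + 1)⟫ := by
      rw [hinner]
      have h1' := (abs_le.mp hb1).1
      have h3' := (abs_le.mp hb3).1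
      linarith
    -- final computation
    have hsqrt40 : Real.sqrt 40 ≤ 6.33 := by
      rw [show (6.33:ℝ) = Real.sqrt (6.33 ^ 2) from (Real.sqrt_sq (by norm_num)).symm]
      exact Real.sqrt_le_sqrt (by norm_num)
    set D := Real.sqrt (((L:ℝ) + 1) * a) with hD_def
    have hDpos : 0 < D := Real.sqrt_pos.mpr (by positivity)
    have hCD : C = Real.sqrt 40 * D := by
      rw [hC, hD_def, mul_assoc, Real.sqrt_mul (by norm_num : (0:ℝ) ≤ 40)]
    have hval : ⟪v l, xbar⟫ = -(C⁻¹ * ⟪v l, z (L + 1)⟫) := by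
      rw [hxbar, inner_neg_right, real_inner_smul_right]
    rw [hval, neg_le_neg_iff, inv_mul_eq_div, le_div_iff₀ hCpos, hCD]
    have hs40 : (0:ℝ) ≤ Real.sqrt 40 := Real.sqrt_nonneg 40
    calc 1 / (40 * D) * (Real.sqrt 40 * D) = Real.sqrt 40 * (D / D) / 40 := by ring
      _ = Real.sqrt 40 / 40 := by rw [div_self hDpos.ne']; ring
      _ ≤ 6.33 / 40 := by linarith
      _ ≤ ⟪v l, z (L + 1)⟫ := by linarith
end

section
/- Let d, n ≥ 1, let A ∈ {−1,1}^{n×d}, let w_0, w_1, …, w_m ∈ ℝ^d be unit-norm vectors, and let η₀, η₁ > 0. Define Q = {x ∈ B_d(0,1) : ‖A x‖_∞ ≤ η₀ and ⟨w_j, x⟩ ≤ −η₁ for all 0 ≤ j ≤ m}. Suppose x̄ ∈ B_d(0,1) satisfies ‖A x̄‖_∞ = 0 and ⟨w_j, x̄⟩ ≤ −4 η₁ for all 0 ≤ j ≤ m. Set ε = min{η₀/√d, η₁}/2. Then B_d(x̄ − ε · x̄/‖x̄‖, ε) ⊆ B_d(0,1) ∩ B_d(x̄, 2ε) ⊆ Q;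 in particular Q contains a Euclidean ball of radius ε. -/
open scoped RealInnerProductSpace

/-- If `x̄` is in the unit ball, exactly orthogonal to every (±1)-row `a_i` of `A`, and
satisfies `⟨w_j, x̄⟩ ≤ -4η₁` for every `j`, then with `ε = min{η₀/√d, η₁}/2` the set
`Q = {x ∈ B(0,1) : ‖Ax‖_∞ ≤ η₀, ⟨w_j, x⟩ ≤ -η₁ ∀j}` contains
`B(x̄ - ε x̄/‖x̄‖, ε) ⊆ B(0,1) ∩ B(x̄, 2ε)`; in particular `Q` contains a ball of radius
`ε`. -/
theorem feasible_set_contains_ball (d n m : ℕ) (hd : 1 ≤ d) (hn : 1 ≤ n)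
    (a : Fin n → EuclideanSpace ℝ (Fin d))
    (ha : ∀ i j, a i j = 1 ∨ a i j = -1)
    (w : Fin (m + 1) → EuclideanSpace ℝ (Fin d)) (hw : ∀ j, ‖w j‖ = 1)
    (η₀ η₁ : ℝ) (hη₀ : 0 < η₀) (hη₁ : 0 < η₁)
    (Q : Set (EuclideanSpace ℝ (Fin d)))
    (hQ : Q = {x ∈ Metric.closedBall (0 : EuclideanSpace ℝ (Fin d)) 1 |
        (∀ i, |⟪a i, x⟫| ≤ η₀) ∧ ∀ j, ⟪w j, x⟫ ≤ -η₁})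
    (xbar : EuclideanSpace ℝ (Fin d))
    (hxbar : xbar ∈ Metric.closedBall (0 : EuclideanSpace ℝ (Fin d)) 1)
    (hA : ∀ i, ⟪a i, xbar⟫ = 0)
    (hws : ∀ j, ⟪w j, xbar⟫ ≤ -(4 * η₁))
    (ε : ℝ) (hε : ε = min (η₀ / Real.sqrt d) η₁ / 2) :
    Metric.closedBall (xbar - (ε / ‖xbar‖) • xbar) ε
        ⊆ Metric.closedBall (0 : EuclideanSpace ℝ (Fin d)) 1 ∩ Metric.closedBall xbar (2 * ε) ∧
      Metric.closedBall (0 : EuclideanSpace ℝ (Fin d)) 1 ∩ Metric.closedBall xbar (2 * ε) ⊆ Q ∧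
      ∃ c, Metric.closedBall c ε ⊆ Q := by
  subst hQ
  have hsd : 0 < Real.sqrt d := Real.sqrt_pos.2 (by exact_mod_cast Nat.lt_of_lt_of_le Nat.zero_lt_one hd)
  have hεpos : 0 < ε := by
    rw [hε]; exact div_pos (lt_min (div_pos hη₀ hsd) hη₁) two_pos
  have h2ε0 : 2 * ε ≤ η₀ / Real.sqrt d := by
    have := min_le_left (η₀ / Real.sqrt d) η₁; linarith [hε ▸ le_refl ε, this]
  have h2ε1 : 2 * ε ≤ η₁ := by
    have := min_le_right (η₀ / Real.sqrt d) η₁; linarith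
  -- ‖xbar‖ ≥ 4η₁
  have hxn : 4 * η₁ ≤ ‖xbar‖ := by
    have h1 : |⟪w 0, xbar⟫| ≤ ‖w 0‖ * ‖xbar‖ := abs_real_inner_le_norm _ _
    rw [hw 0, one_mul] at h1
    have h2 := hws 0
    have h3 : -⟪w 0, xbar⟫ ≤ |⟪w 0, xbar⟫| := neg_le_abs _
    linarith
  have hxpos : 0 < ‖xbar‖ := lt_of_lt_of_le (by linarith) hxn
  have hεx : ε ≤ ‖xbar‖ := by linarith
  have hxle1 : ‖xbar‖ ≤ 1 := by
    rw [Metric.mem_closedBall, dist_zero_right] at hxbar; exact hxbar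
  have hcn : ‖xbar - (ε / ‖xbar‖) • xbar‖ = ‖xbar‖ - ε := by
    have h1 : xbar - (ε / ‖xbar‖) • xbar = (1 - ε / ‖xbar‖) • xbar := by
      rw [sub_smul, one_smul]
    rw [h1, norm_smul, Real.norm_eq_abs,
      abs_of_nonneg (by rw [sub_nonneg, div_le_one hxpos]; exact hεx)]
    field_simp
  have hcx : ‖(xbar - (ε / ‖xbar‖) • xbar) - xbar‖ = ε := by
    have h1 : (xbar - (ε / ‖xbar‖) • xbar) - xbar = -((ε / ‖xbar‖) • xbar) := by
      abel
    rw [h1, norm_neg, norm_smul, Real.norm_eq_abs,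
      abs_of_nonneg (le_of_lt (div_pos hεpos hxpos))]
    field_simp
  have hsub1 : Metric.closedBall (xbar - (ε / ‖xbar‖) • xbar) ε
      ⊆ Metric.closedBall (0 : EuclideanSpace ℝ (Fin d)) 1 ∩ Metric.closedBall xbar (2 * ε) := by
    intro x hx
    rw [Metric.mem_closedBall, dist_eq_norm] at hx
    constructor
    · rw [Metric.mem_closedBall, dist_zero_right]
      calc ‖x‖ = ‖(x - (xbar - (ε / ‖xbar‖) • xbar)) + (xbar - (ε / ‖xbar‖) • xbar)‖ := by
            rw [sub_add_cancel]
        _ ≤ ‖x - (xbar - (ε / ‖xbar‖) • xbar)‖ + ‖xbar - (ε / ‖xbar‖) • xbar‖ := norm_add_le _ _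
        _ ≤ ε + (‖xbar‖ - ε) := by rw [hcn]; linarith
        _ ≤ 1 := by linarith
    · rw [Metric.mem_closedBall, dist_eq_norm]
      calc ‖x - xbar‖
          = ‖(x - (xbar - (ε / ‖xbar‖) • xbar)) + ((xbar - (ε / ‖xbar‖) • xbar) - xbar)‖ := by
            abel_nf
        _ ≤ ‖x - (xbar - (ε / ‖xbar‖) • xbar)‖ + ‖(xbar - (ε / ‖xbar‖) • xbar) - xbar‖ :=
            norm_add_le _ _
        _ ≤ ε + ε := by rw [hcx]; linarith
        _ = 2 * ε := by ring
  have hna : ∀ i, ‖a i‖ = Real.sqrt d := by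
    intro i
    rw [EuclideanSpace.norm_eq]
    congr 1
    calc ∑ j, ‖a i j‖ ^ 2 = ∑ j : Fin d, (1 : ℝ) := by
          refine Finset.sum_congr rfl fun j _ => ?_
          rcases ha i j with h | h <;> simp [h]
      _ = d := by simp
  have hsub2 : Metric.closedBall (0 : EuclideanSpace ℝ (Fin d)) 1 ∩ Metric.closedBall xbar (2 * ε)
      ⊆ {x ∈ Metric.closedBall (0 : EuclideanSpace ℝ (Fin d)) 1 |
        (∀ i, |⟪a i, x⟫| ≤ η₀) ∧ ∀ j, ⟪w j, x⟫ ≤ -η₁} := by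
    rintro x ⟨hx1, hx2⟩
    rw [Metric.mem_closedBall, dist_eq_norm] at hx2
    refine ⟨hx1, fun i => ?_, fun j => ?_⟩
    · have h1 : ⟪a i, x⟫ = ⟪a i, x - xbar⟫ := by
        rw [inner_sub_right, hA i, sub_zero]
      rw [h1]
      calc |⟪a i, x - xbar⟫| ≤ ‖a i‖ * ‖x - xbar‖ := abs_real_inner_le_norm _ _
        _ ≤ Real.sqrt d * (η₀ / Real.sqrt d) := by
            rw [hna i]
            exact mul_le_mul_of_nonneg_left (le_trans hx2 h2ε0) (le_of_lt hsd)
        _ = η₀ := by rw [mul_comm, div_mul_cancel₀ _ (ne_of_gt hsd)]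
    · have h1 : ⟪w j, x⟫ = ⟪w j, xbar⟫ + ⟪w j, x - xbar⟫ := by
        rw [inner_sub_right]; ring
      have h2 : ⟪w j, x - xbar⟫ ≤ ‖w j‖ * ‖x - xbar‖ := real_inner_le_norm _ _
      rw [hw j, one_mul] at h2
      have := hws j
      linarith
  exact ⟨hsub1, hsub2, _, fun x hx => hsub2 (hsub1 hx)⟩
end
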